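/- Let S and A be nonempty finite subsets of normed spaces, each with ℓ1 diameter at most 1. Let γ ∈ [0, 1), d_r, d_P ≥ 0 with γ d_P / 2 < 1. Let r̄ : S × A → ℝ satisfy |r̄(s₁, a) − r̄(s₂, a)| ≤ d_r ‖s₁ − s₂‖₁, let P̄ : S × A → Δ(S) satisfy ‖P̄(·|s₁, a) − P̄(·|s₂, a)‖₁ ≤ d_P ‖s₁ − s₂‖₁, and define the Bellman operator (T Q)(s) = max_{a ∈ A} [ r̄(s, a) + γ ∑_{s′} Q(s′) P̄(s′|s, a) ]. Then T has a unique fixed point Q* : S → ℝ, and Q* is Lipschitz in the state with constant d_r / (1 − γ d_P / 2): |Q*(s₁) − Q*(s₂)| ≤ (d_r / (1 − γ d_P / 2)) ‖s₁ − s₂‖₁ for all s₁, s₂ ∈ S. -/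
import Mathlib

lemma abs_sup'_sub_sup'_le' {W : Type*} (A : Finset W) (hA : A.Nonempty)
    (f g : W → ℝ) (B : ℝ) (h : ∀ a ∈ A, |f a - g a| ≤ B) :
    |A.sup' hA f - A.sup' hA g| ≤ B := by
  rw [abs_sub_le_iff]
  constructor
  · rw [sub_le_iff_le_add]
    apply Finset.sup'_le
    intro a ha
    have h1 := h a ha
    have h2 := Finset.le_sup' g ha
    rw [abs_le] at h1
    linarith
  · rw [sub_le_iff_le_add]
    apply Finset.sup'_le
    intro a ha
    have h1 := h a ha
    have h2 := Finset.le_sup' f ha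
    rw [abs_le] at h1
    linarith



/-- Bellman optimality operator of a discounted MDP with finite state set `S`,
finite action set `A`, reward `rbar` and transition kernel `Pbar`:
`(T Q)(s) = max_{a ∈ A} [ rbar s a + γ ∑_{s' ∈ S} Q s' · Pbar s a s' ]`. -/
noncomputable def bellman {V W : Type*} [NormedAddCommGroup V] [NormedAddCommGroup W]
    (S : Finset V) (A : Finset W) (hA : A.Nonempty) (γ : ℝ)
    (rbar : V → W → ℝ) (Pbar : V → W → V → ℝ) (Q : V → ℝ) : V → ℝ :=
  fun s => A.sup' hA (fun a => rbar s a + γ * ∑ s' ∈ S, Q s' * Pbar s a s')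

/-- The Bellman operator has a unique fixed point `Q*`, and `Q*` is Lipschitz in
the state with constant `d_r / (1 − γ d_P / 2)`. -/
theorem bellman_fixed_point_lipschitz
    {V W : Type*} [NormedAddCommGroup V] [NormedAddCommGroup W]
    (S : Finset V) (A : Finset W) (hS : S.Nonempty) (hA : A.Nonempty)
    (hSdiam : ∀ s₁ ∈ S, ∀ s₂ ∈ S, ‖s₁ - s₂‖ ≤ 1)
    (hAdiam : ∀ a₁ ∈ A, ∀ a₂ ∈ A, ‖a₁ - a₂‖ ≤ 1)
    (γ : ℝ) (hγ0 : 0 ≤ γ) (hγ1 : γ < 1)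
    (d_r d_P : ℝ) (hdr : 0 ≤ d_r) (hdP : 0 ≤ d_P) (hγdP : γ * d_P / 2 < 1)
    (rbar : V → W → ℝ) (Pbar : V → W → V → ℝ)
    (hr : ∀ a ∈ A, ∀ s₁ ∈ S, ∀ s₂ ∈ S,
      |rbar s₁ a - rbar s₂ a| ≤ d_r * ‖s₁ - s₂‖)
    (hPmem : ∀ s ∈ S, ∀ a ∈ A,
      (∀ s' ∈ S, 0 ≤ Pbar s a s') ∧ ∑ s' ∈ S, Pbar s a s' = 1)
    (hPlip : ∀ a ∈ A, ∀ s₁ ∈ S, ∀ s₂ ∈ S,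
      ∑ s' ∈ S, |Pbar s₁ a s' - Pbar s₂ a s'| ≤ d_P * ‖s₁ - s₂‖) :
    ∃ Qstar : V → ℝ,
      (∀ s, Qstar s = bellman S A hA γ rbar Pbar Qstar s) ∧
      (∀ Q' : V → ℝ, (∀ s, Q' s = bellman S A hA γ rbar Pbar Q' s) → Q' = Qstar) ∧
      (∀ s₁ ∈ S, ∀ s₂ ∈ S,
        |Qstar s₁ - Qstar s₂| ≤ (d_r / (1 - γ * d_P / 2)) * ‖s₁ - s₂‖) := by
  classical
  set ext : (↥S → ℝ) → V → ℝ := fun q v => if h : v ∈ S then q ⟨v, h⟩ else 0 with hext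
  have bcongr : ∀ Q₁ Q₂ : V → ℝ, (∀ s ∈ S, Q₁ s = Q₂ s) →
      ∀ s, bellman S A hA γ rbar Pbar Q₁ s = bellman S A hA γ rbar Pbar Q₂ s := by
    intro Q₁ Q₂ h s
    unfold bellman
    refine Finset.sup'_congr hA rfl (fun a _ => ?_)
    have : ∑ s' ∈ S, Q₁ s' * Pbar s a s' = ∑ s' ∈ S, Q₂ s' * Pbar s a s' :=
      Finset.sum_congr rfl fun s' hs' => by rw [h s' hs']
    rw [this]
  set F : (↥S → ℝ) → (↥S → ℝ) :=
    fun q s => bellman S A hA γ rbar Pbar (ext q) s.1 with hF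
  -- contraction
  set K : NNReal := ⟨γ, hγ0⟩ with hK
  have hcontr : ContractingWith K F := by
    constructor
    · exact_mod_cast hγ1
    · apply LipschitzWith.of_dist_le_mul
      intro q₁ q₂
      show dist (F q₁) (F q₂) ≤ γ * dist q₁ q₂
      rw [dist_pi_le_iff (mul_nonneg hγ0 dist_nonneg)]
      intro s
      rw [Real.dist_eq]
      apply abs_sup'_sub_sup'_le'
      intro a ha
      obtain ⟨hPnn, hP1⟩ := hPmem s.1 s.2 a ha
      have heq : (rbar s.1 a + γ * ∑ s' ∈ S, ext q₁ s' * Pbar s.1 a s') -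
          (rbar s.1 a + γ * ∑ s' ∈ S, ext q₂ s' * Pbar s.1 a s')
          = γ * ∑ s' ∈ S, (ext q₁ s' - ext q₂ s') * Pbar s.1 a s' := by
        rw [Finset.sum_congr rfl (fun s' _ => by ring :
          ∀ s' ∈ S, (ext q₁ s' - ext q₂ s') * Pbar s.1 a s'
            = ext q₁ s' * Pbar s.1 a s' - ext q₂ s' * Pbar s.1 a s'),
          Finset.sum_sub_distrib]
        ring
      rw [heq, abs_mul, abs_of_nonneg hγ0]
      have hbound : |∑ s' ∈ S, (ext q₁ s' - ext q₂ s') * Pbar s.1 a s'| ≤ dist q₁ q₂ := by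
        calc |∑ s' ∈ S, (ext q₁ s' - ext q₂ s') * Pbar s.1 a s'|
            ≤ ∑ s' ∈ S, |(ext q₁ s' - ext q₂ s') * Pbar s.1 a s'| :=
              Finset.abs_sum_le_sum_abs _ _
          _ ≤ ∑ s' ∈ S, dist q₁ q₂ * Pbar s.1 a s' := by
              apply Finset.sum_le_sum
              intro s' hs'
              rw [abs_mul, abs_of_nonneg (hPnn s' hs')]
              apply mul_le_mul_of_nonneg_right _ (hPnn s' hs')
              have : ext q₁ s' - ext q₂ s' = q₁ ⟨s', hs'⟩ - q₂ ⟨s', hs'⟩ := by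
                simp [hext, hs']
              rw [this, ← Real.dist_eq]
              exact dist_le_pi_dist q₁ q₂ ⟨s', hs'⟩
          _ = dist q₁ q₂ := by rw [← Finset.mul_sum, hP1, mul_one]
      exact mul_le_mul_of_nonneg_left hbound hγ0
  haveI : Nonempty (↥S → ℝ) := ⟨fun _ => 0⟩
  set qstar : ↥S → ℝ := ContractingWith.fixedPoint F hcontr with hqs
  have hfix : F qstar = qstar := hcontr.fixedPoint_isFixedPt
  set Qstar : V → ℝ := bellman S A hA γ rbar Pbar (ext qstar) with hQdef
  have hQS : ∀ s (hs : s ∈ S), Qstar s = qstar ⟨s, hs⟩ := by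
    intro s hs
    have : F qstar ⟨s, hs⟩ = qstar ⟨s, hs⟩ := by rw [hfix]
    exact this.symm ▸ rfl
  have hQext : ∀ s ∈ S, Qstar s = ext qstar s := by
    intro s hs
    rw [hQS s hs]
    simp [hext, hs]
  have hfixQ : ∀ s, Qstar s = bellman S A hA γ rbar Pbar Qstar s := by
    intro s
    rw [bcongr Qstar (ext qstar) hQext s]
  refine ⟨Qstar, hfixQ, ?_, ?_⟩
  · -- uniqueness
    intro Q' hQ'
    set q' : ↥S → ℝ := fun s => Q' s.1 with hq'
    have hq'fix : Function.IsFixedPt F q' := by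
      funext s
      show bellman S A hA γ rbar Pbar (ext q') s.1 = Q' s.1
      rw [bcongr (ext q') Q' (fun t ht => by simp [hext, hq', ht]) s.1]
      exact (hQ' s.1).symm
    have hq'eq : q' = qstar := hcontr.fixedPoint_unique' hq'fix hcontr.fixedPoint_isFixedPt
    funext s
    have hagree : ∀ t ∈ S, Q' t = Qstar t := by
      intro t ht
      have : Q' t = q' ⟨t, ht⟩ := rfl
      rw [this, hq'eq, ← hQS t ht]
    rw [hQ' s, bcongr Q' Qstar hagree s, ← hfixQ s]
  · -- Lipschitz
    set m : ℝ := S.inf' hS Qstar with hm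
    set M : ℝ := S.sup' hS Qstar with hM
    have hDnn : 0 ≤ M - m := by
      obtain ⟨s0, hs0⟩ := hS
      have h1 := Finset.inf'_le Qstar hs0
      have h2 := Finset.le_sup' Qstar hs0
      linarith
    have hosc : ∀ s' ∈ S, |Qstar s' - (M + m) / 2| ≤ (M - m) / 2 := by
      intro s' hs'
      have h1 := Finset.inf'_le Qstar hs'
      have h2 := Finset.le_sup' Qstar hs'
      rw [abs_le]; constructor <;> linarith
    have key : ∀ s₁ ∈ S, ∀ s₂ ∈ S,
        |Qstar s₁ - Qstar s₂| ≤ (d_r + γ * (d_P / 2) * (M - m)) * ‖s₁ - s₂‖ := by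
      intro s₁ hs₁ s₂ hs₂
      rw [hfixQ s₁, hfixQ s₂]
      apply abs_sup'_sub_sup'_le'
      intro a ha
      obtain ⟨hP1nn, hP1s⟩ := hPmem s₁ hs₁ a ha
      obtain ⟨hP2nn, hP2s⟩ := hPmem s₂ hs₂ a ha
      set c : ℝ := (M + m) / 2 with hc
      have hsum : (∑ s' ∈ S, Qstar s' * Pbar s₁ a s') - ∑ s' ∈ S, Qstar s' * Pbar s₂ a s'
          = ∑ s' ∈ S, (Qstar s' - c) * (Pbar s₁ a s' - Pbar s₂ a s') := by
        have : ∑ s' ∈ S, (Qstar s' - c) * (Pbar s₁ a s' - Pbar s₂ a s')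
            = (∑ s' ∈ S, Qstar s' * Pbar s₁ a s') - (∑ s' ∈ S, Qstar s' * Pbar s₂ a s')
              - c * ((∑ s' ∈ S, Pbar s₁ a s') - ∑ s' ∈ S, Pbar s₂ a s') := by
          rw [Finset.sum_congr rfl (fun s' _ => by ring :
            ∀ s' ∈ S, (Qstar s' - c) * (Pbar s₁ a s' - Pbar s₂ a s')
              = Qstar s' * Pbar s₁ a s' - Qstar s' * Pbar s₂ a s'
                - (c * Pbar s₁ a s' - c * Pbar s₂ a s'))]
          simp only [Finset.sum_sub_distrib, ← Finset.mul_sum]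
          ring
        rw [this, hP1s, hP2s]
        ring
      have hsumbd : |∑ s' ∈ S, (Qstar s' - c) * (Pbar s₁ a s' - Pbar s₂ a s')|
          ≤ (M - m) / 2 * (d_P * ‖s₁ - s₂‖) := by
        calc |∑ s' ∈ S, (Qstar s' - c) * (Pbar s₁ a s' - Pbar s₂ a s')|
            ≤ ∑ s' ∈ S, |(Qstar s' - c) * (Pbar s₁ a s' - Pbar s₂ a s')| :=
              Finset.abs_sum_le_sum_abs _ _
          _ ≤ ∑ s' ∈ S, (M - m) / 2 * |Pbar s₁ a s' - Pbar s₂ a s'| := by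
              apply Finset.sum_le_sum
              intro s' hs'
              rw [abs_mul]
              exact mul_le_mul_of_nonneg_right (hosc s' hs') (abs_nonneg _)
          _ = (M - m) / 2 * ∑ s' ∈ S, |Pbar s₁ a s' - Pbar s₂ a s'| := by
              rw [Finset.mul_sum]
          _ ≤ (M - m) / 2 * (d_P * ‖s₁ - s₂‖) := by
              apply mul_le_mul_of_nonneg_left (hPlip a ha s₁ hs₁ s₂ hs₂)
              linarith
      have hreq : (rbar s₁ a + γ * ∑ s' ∈ S, Qstar s' * Pbar s₁ a s') -
          (rbar s₂ a + γ * ∑ s' ∈ S, Qstar s' * Pbar s₂ a s')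
          = (rbar s₁ a - rbar s₂ a)
            + γ * ∑ s' ∈ S, (Qstar s' - c) * (Pbar s₁ a s' - Pbar s₂ a s') := by
        rw [← hsum]; ring
      rw [hreq]
      calc |(rbar s₁ a - rbar s₂ a)
            + γ * ∑ s' ∈ S, (Qstar s' - c) * (Pbar s₁ a s' - Pbar s₂ a s')|
          ≤ |rbar s₁ a - rbar s₂ a|
            + γ * |∑ s' ∈ S, (Qstar s' - c) * (Pbar s₁ a s' - Pbar s₂ a s')| := by
            refine (abs_add_le _ _).trans ?_
            rw [abs_mul, abs_of_nonneg hγ0]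
        _ ≤ d_r * ‖s₁ - s₂‖ + γ * ((M - m) / 2 * (d_P * ‖s₁ - s₂‖)) := by
            have := hr a ha s₁ hs₁ s₂ hs₂
            have := mul_le_mul_of_nonneg_left hsumbd hγ0
            linarith
        _ = (d_r + γ * (d_P / 2) * (M - m)) * ‖s₁ - s₂‖ := by ring
    have hpos : (0:ℝ) < 1 - γ * d_P / 2 := by linarith
    have hD : M - m ≤ d_r + γ * (d_P / 2) * (M - m) := by
      obtain ⟨sM, hsM, hMeq⟩ := Finset.exists_mem_eq_sup' hS Qstar
      obtain ⟨sm, hsm, hmeq⟩ := Finset.exists_mem_eq_inf' hS Qstar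
      have h1 : M - m = Qstar sM - Qstar sm := by rw [hM, hm, hMeq, hmeq]
      have h2 := key sM hsM sm hsm
      have h3 : |Qstar sM - Qstar sm| ≤ (d_r + γ * (d_P / 2) * (M - m)) * 1 := by
        refine h2.trans (mul_le_mul_of_nonneg_left (hSdiam sM hsM sm hsm) ?_)
        have := mul_nonneg (mul_nonneg hγ0 (by linarith : (0:ℝ) ≤ d_P / 2)) hDnn
        linarith
      rw [mul_one] at h3
      calc M - m = Qstar sM - Qstar sm := h1
        _ ≤ |Qstar sM - Qstar sm| := le_abs_self _
        _ ≤ d_r + γ * (d_P / 2) * (M - m) := h3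
    have hDle : M - m ≤ d_r / (1 - γ * d_P / 2) := by
      rw [le_div_iff₀ hpos]
      nlinarith
    intro s₁ hs₁ s₂ hs₂
    refine (key s₁ hs₁ s₂ hs₂).trans (mul_le_mul_of_nonneg_right ?_ (norm_nonneg _))
    have hL : d_r / (1 - γ * d_P / 2) * (1 - γ * d_P / 2) = d_r :=
      div_mul_cancel₀ _ (ne_of_gt hpos)
    nlinarith [mul_le_mul_of_nonneg_left hDle (mul_nonneg hγ0 (by linarith : (0:ℝ) ≤ d_P / 2))]
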